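/- If x ∈ ℝ³ satisfies x₁² + x₂² + x₃² = 1 and each coordinate xᵢ is a dyadic rational (i.e., of the form z/2^k with z ∈ ℤ and k ∈ ℕ), then each xᵢ ∈ {-1, 0, 1}. Consequently there are exactly 6 points with dyadic-rational (in particular, floating-point representable) coordinates on the unit sphere S². -/

import Mathlib

/-- A real number is a dyadic rational if it has the form `z / 2 ^ k`
with `z : ℤ` and `k : ℕ`. -/
def IsDyadic (x : ℝ) : Prop := ∃ (z : ℤ) (k : ℕ), x = (z : ℝ) / 2 ^ k

lemma dyadic_descent : ∀ (k : ℕ) (x y z : ℤ), x^2 + y^2 + z^2 = 4^k →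
    ∃ a b c : ℤ, x = 2^k * a ∧ y = 2^k * b ∧ z = 2^k * c ∧ a^2 + b^2 + c^2 = 1 := by
  intro k
  induction k with
  | zero => intro x y z h
            exact ⟨x, y, z, by simp, by simp, by simp, by simpa using h⟩
  | succ n ih =>
    intro x y z h
    rcases Int.even_or_odd x with ⟨a, rfl⟩ | ⟨a, rfl⟩ <;>
    rcases Int.even_or_odd y with ⟨b, rfl⟩ | ⟨b, rfl⟩ <;>
    rcases Int.even_or_odd z with ⟨c, rfl⟩ | ⟨c, rfl⟩
    · have h' : a^2 + b^2 + c^2 = 4^n := by ring_nf at h ⊢; nlinarith [h]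
      obtain ⟨a', b', c', ha, hb, hc, hs⟩ := ih a b c h'
      exact ⟨a', b', c', by rw [ha]; ring, by rw [hb]; ring, by rw [hc]; ring, hs⟩
    all_goals {
      exfalso
      have h4 : (4:ℤ)^(n+1) = 4 * 4^n := by ring
      rw [h4] at h
      ring_nf at h
      set A := a^2; set B := b^2; set C := c^2; set M := (4:ℤ)^n
      omega }

lemma dyadic_unit_int (a b c : ℤ) (h : a^2 + b^2 + c^2 = 1) :
    ((a:ℝ) ∈ ({-1,0,1} : Set ℝ)) := by
  have h1 : a^2 ≤ 1 := by nlinarith [sq_nonneg b, sq_nonneg c]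
  have hl : -1 ≤ a := by nlinarith
  have hr : a ≤ 1 := by nlinarith
  interval_cases a <;> simp

lemma dyadic_rescale (z : ℤ) (j k : ℕ) (h : j ≤ k) :
    (z : ℝ) / 2 ^ j = ((z * 2 ^ (k - j) : ℤ) : ℝ) / 2 ^ k := by
  have : (2:ℝ)^k = 2^j * 2^(k-j) := by
    rw [← pow_add, Nat.add_sub_cancel' h]
  push_cast
  rw [this]
  field_simp

lemma dyadic_coords (x₁ x₂ x₃ : ℝ) (h1 : IsDyadic x₁) (h2 : IsDyadic x₂) (h3 : IsDyadic x₃)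
    (heq : x₁ ^ 2 + x₂ ^ 2 + x₃ ^ 2 = 1) :
    x₁ ∈ ({-1, 0, 1} : Set ℝ) ∧ x₂ ∈ ({-1, 0, 1} : Set ℝ) ∧ x₃ ∈ ({-1, 0, 1} : Set ℝ) := by
  obtain ⟨z1, k1, rfl⟩ := h1
  obtain ⟨z2, k2, rfl⟩ := h2
  obtain ⟨z3, k3, rfl⟩ := h3
  set k := max k1 (max k2 k3) with hk
  rw [dyadic_rescale z1 k1 k (le_max_left _ _),
      dyadic_rescale z2 k2 k (le_trans (le_max_left _ _) (le_max_right _ _)),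
      dyadic_rescale z3 k3 k (le_trans (le_max_right _ _) (le_max_right _ _))] at heq ⊢
  set X := z1 * 2 ^ (k - k1)
  set Y := z2 * 2 ^ (k - k2)
  set Z := z3 * 2 ^ (k - k3)
  have hpow : (0:ℝ) < 2 ^ k := by positivity
  have hint : X^2 + Y^2 + Z^2 = 4^k := by
    have : ((X^2 + Y^2 + Z^2 : ℤ) : ℝ) = ((4^k : ℤ) : ℝ) := by
      push_cast
      field_simp at heq
      have h4 : (4:ℝ)^k = (2^k)^2 := by rw [← pow_mul, mul_comm, pow_mul]; norm_num
      rw [h4]; linarith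
    exact_mod_cast this
  obtain ⟨a, b, c, ha, hb, hc, hs⟩ := dyadic_descent k X Y Z hint
  rw [ha, hb, hc]
  refine ⟨?_, ?_, ?_⟩
  · have : ((2^k * a : ℤ) : ℝ) / 2^k = (a:ℝ) := by push_cast; field_simp
    rw [this]; exact dyadic_unit_int a b c hs
  · have : ((2^k * b : ℤ) : ℝ) / 2^k = (b:ℝ) := by push_cast; field_simp
    rw [this]; exact dyadic_unit_int b a c (by linarith)
  · have : ((2^k * c : ℤ) : ℝ) / 2^k = (c:ℝ) := by push_cast; field_simp
    rw [this]; exact dyadic_unit_int c a b (by linarith)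

/-- The only points on the unit sphere `S²` with dyadic-rational coordinates have
coordinates in `{-1, 0, 1}`; consequently there are exactly 6 such points. -/
theorem dyadic_points_on_unit_sphere :
    (∀ x₁ x₂ x₃ : ℝ, IsDyadic x₁ → IsDyadic x₂ → IsDyadic x₃ →
      x₁ ^ 2 + x₂ ^ 2 + x₃ ^ 2 = 1 →
      x₁ ∈ ({-1, 0, 1} : Set ℝ) ∧ x₂ ∈ ({-1, 0, 1} : Set ℝ) ∧
        x₃ ∈ ({-1, 0, 1} : Set ℝ)) ∧
    {p : ℝ × ℝ × ℝ | IsDyadic p.1 ∧ IsDyadic p.2.1 ∧ IsDyadic p.2.2 ∧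
      p.1 ^ 2 + p.2.1 ^ 2 + p.2.2 ^ 2 = 1}.ncard = 6 := by
  refine ⟨dyadic_coords, ?_⟩
  have d0 : IsDyadic 0 := ⟨0, 0, by norm_num⟩
  have d1 : IsDyadic 1 := ⟨1, 0, by norm_num⟩
  have dm : IsDyadic (-1) := ⟨-1, 0, by norm_num⟩
  have hset : {p : ℝ × ℝ × ℝ | IsDyadic p.1 ∧ IsDyadic p.2.1 ∧ IsDyadic p.2.2 ∧
      p.1 ^ 2 + p.2.1 ^ 2 + p.2.2 ^ 2 = 1} =
      ({((1:ℝ),(0:ℝ),(0:ℝ)), (-1,0,0), (0,1,0), (0,-1,0), (0,0,1), (0,0,-1)} :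
        Set (ℝ × ℝ × ℝ)) := by
    ext ⟨a, b, c⟩
    simp only [Set.mem_setOf_eq, Set.mem_insert_iff, Set.mem_singleton_iff, Prod.mk.injEq]
    constructor
    · rintro ⟨h1, h2, h3, heq⟩
      obtain ⟨m1, m2, m3⟩ := dyadic_coords a b c h1 h2 h3 heq
      simp only [Set.mem_insert_iff, Set.mem_singleton_iff] at m1 m2 m3
      rcases m1 with rfl | rfl | rfl <;> rcases m2 with rfl | rfl | rfl <;>
        rcases m3 with rfl | rfl | rfl <;> revert heq <;> norm_num
    · rintro (⟨rfl, rfl, rfl⟩ | ⟨rfl, rfl, rfl⟩ | ⟨rfl, rfl, rfl⟩ | ⟨rfl, rfl, rfl⟩ |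
        ⟨rfl, rfl, rfl⟩ | ⟨rfl, rfl, rfl⟩) <;>
      exact ⟨by assumption, by assumption, by assumption, by norm_num⟩
  rw [hset]
  rw [Set.ncard_insert_of_notMem (by norm_num [Prod.ext_iff]),
      Set.ncard_insert_of_notMem (by norm_num [Prod.ext_iff]),
      Set.ncard_insert_of_notMem (by norm_num [Prod.ext_iff]),
      Set.ncard_insert_of_notMem (by norm_num [Prod.ext_iff]),
      Set.ncard_insert_of_notMem (by norm_num [Prod.ext_iff]),
      Set.ncard_singleton]
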